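/- (Relaxed Regularization Path Bound, RRPB) Fix γ ∈ (0,1], a finite index set T, symmetric matrices H_t ∈ ℝ^{d×d} (t ∈ T), and λ₀, λ₁ > 0. Let M₀* be optimal for λ₀ and M₁* be optimal for λ₁ (i.e., M_i* ⪰ O minimizes P_{λᵢ} over positive semi-definite matrices), and let M₀ be a symmetric matrix with ‖M₀* − M₀‖_F ≤ ε for some ε ≥ 0. Then ‖M₁* − ((λ₀+λ₁)/(2λ₁))·M₀‖_F ≤ (|λ₀−λ₁|/(2λ₁))·‖M₀‖_F + ((|λ₀−λ₁| + λ₀ + λ₁)/(2λ₁))·ε. -/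

import Mathlib

open scoped BigOperators
open scoped Matrix

/-- Frobenius inner product ⟨A,B⟩ = tr(Aᵀ B). -/
noncomputable def frob {d : ℕ} (A B : Matrix (Fin d) (Fin d) ℝ) : ℝ :=
  Matrix.trace (Aᵀ * B)

/-- Frobenius norm ‖A‖_F = √⟨A,A⟩. -/
noncomputable def frobNorm {d : ℕ} (A : Matrix (Fin d) (Fin d) ℝ) : ℝ :=
  Real.sqrt (frob A A)

/-- Smoothed hinge loss ℓ_γ. -/
noncomputable def shinge (γ x : ℝ) : ℝ :=
  if 1 < x then 0 else if 1 - γ ≤ x then (1 - x) ^ 2 / (2 * γ) else 1 - x - γ / 2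

/-- Derivative of the smoothed hinge loss ℓ_γ'. -/
noncomputable def shinge' (γ x : ℝ) : ℝ :=
  if 1 < x then 0 else if 1 - γ ≤ x then -(1 - x) / γ else -1

/-- Primal objective P_λ(M) = Σ_t ℓ_γ(⟨M,H_t⟩) + (λ/2)‖M‖_F². -/
noncomputable def Pobj {d : ℕ} {ι : Type*} (γ lam : ℝ) (T : Finset ι)
    (H : ι → Matrix (Fin d) (Fin d) ℝ) (M : Matrix (Fin d) (Fin d) ℝ) : ℝ :=
  (∑ t ∈ T, shinge γ (frob M (H t))) + lam / 2 * frobNorm M ^ 2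

/-- Gradient ∇P_λ(M) = Σ_t ℓ_γ'(⟨M,H_t⟩) H_t + λ M. -/
noncomputable def gradP {d : ℕ} {ι : Type*} (γ lam : ℝ) (T : Finset ι)
    (H : ι → Matrix (Fin d) (Fin d) ℝ) (M : Matrix (Fin d) (Fin d) ℝ) :
    Matrix (Fin d) (Fin d) ℝ :=
  (∑ t ∈ T, shinge' γ (frob M (H t)) • H t) + lam • M

namespace RRPB

variable {d : ℕ}

lemma frob_eq_sum (A B : Matrix (Fin d) (Fin d) ℝ) :
    frob A B = ∑ j, ∑ i, A i j * B i j := by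
  simp [frob, Matrix.trace, Matrix.mul_apply, Matrix.diag, Matrix.transpose_apply]

lemma frob_eq_sum_prod (A B : Matrix (Fin d) (Fin d) ℝ) :
    frob A B = ∑ p : Fin d × Fin d, A p.1 p.2 * B p.1 p.2 := by
  rw [frob_eq_sum, Fintype.sum_prod_type]
  exact Finset.sum_comm

lemma frob_comm (A B : Matrix (Fin d) (Fin d) ℝ) : frob A B = frob B A := by
  simp [frob_eq_sum, mul_comm]

lemma frob_add_left (A B C : Matrix (Fin d) (Fin d) ℝ) :
    frob (A + B) C = frob A C + frob B C := by
  simp [frob_eq_sum, add_mul, Finset.sum_add_distrib]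

lemma frob_smul_left (c : ℝ) (A B : Matrix (Fin d) (Fin d) ℝ) :
    frob (c • A) B = c * frob A B := by
  simp [frob_eq_sum, Finset.mul_sum, mul_assoc]

lemma frob_sub_left (A B C : Matrix (Fin d) (Fin d) ℝ) :
    frob (A - B) C = frob A C - frob B C := by
  simp [frob_eq_sum, sub_mul, Finset.sum_sub_distrib]

lemma frob_add_right (A B C : Matrix (Fin d) (Fin d) ℝ) :
    frob A (B + C) = frob A B + frob A C := by
  rw [frob_comm, frob_add_left, frob_comm B, frob_comm C]

lemma frob_smul_right (c : ℝ) (A B : Matrix (Fin d) (Fin d) ℝ) :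
    frob A (c • B) = c * frob A B := by
  rw [frob_comm, frob_smul_left, frob_comm]

lemma frob_sub_right (A B C : Matrix (Fin d) (Fin d) ℝ) :
    frob A (B - C) = frob A B - frob A C := by
  rw [frob_comm, frob_sub_left, frob_comm B, frob_comm C]

lemma frob_self_nonneg (A : Matrix (Fin d) (Fin d) ℝ) : 0 ≤ frob A A := by
  rw [frob_eq_sum]
  exact Finset.sum_nonneg fun j _ => Finset.sum_nonneg fun i _ => mul_self_nonneg _

lemma frobNorm_nonneg (A : Matrix (Fin d) (Fin d) ℝ) : 0 ≤ frobNorm A :=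
  Real.sqrt_nonneg _

lemma frobNorm_sq (A : Matrix (Fin d) (Fin d) ℝ) : frobNorm A ^ 2 = frob A A :=
  Real.sq_sqrt (frob_self_nonneg A)

lemma frob_le_mul (A B : Matrix (Fin d) (Fin d) ℝ) :
    frob A B ≤ frobNorm A * frobNorm B := by
  have h := Finset.sum_mul_sq_le_sq_mul_sq Finset.univ
    (fun p : Fin d × Fin d => A p.1 p.2) (fun p => B p.1 p.2)
  have h2 : (frob A B) ^ 2 ≤ frob A A * frob B B := by
    rw [frob_eq_sum_prod, frob_eq_sum_prod, frob_eq_sum_prod]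
    simpa [pow_two] using h
  calc frob A B ≤ |frob A B| := le_abs_self _
    _ = Real.sqrt ((frob A B) ^ 2) := (Real.sqrt_sq_eq_abs _).symm
    _ ≤ Real.sqrt (frob A A * frob B B) := Real.sqrt_le_sqrt h2
    _ = frobNorm A * frobNorm B := by
        rw [Real.sqrt_mul (frob_self_nonneg A)]; rfl

lemma frobNorm_add_le (A B : Matrix (Fin d) (Fin d) ℝ) :
    frobNorm (A + B) ≤ frobNorm A + frobNorm B := by
  have h : frob (A + B) (A + B) ≤ (frobNorm A + frobNorm B) ^ 2 := by
    have hc := frob_le_mul A B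
    have := frobNorm_sq A
    have := frobNorm_sq B
    rw [frob_add_left, frob_add_right, frob_add_right, frob_comm B A]
    nlinarith
  calc frobNorm (A + B) = Real.sqrt (frob (A + B) (A + B)) := rfl
    _ ≤ Real.sqrt ((frobNorm A + frobNorm B) ^ 2) := Real.sqrt_le_sqrt h
    _ = frobNorm A + frobNorm B := by
        rw [Real.sqrt_sq (add_nonneg (frobNorm_nonneg A) (frobNorm_nonneg B))]

lemma frobNorm_smul (c : ℝ) (A : Matrix (Fin d) (Fin d) ℝ) :
    frobNorm (c • A) = |c| * frobNorm A := by
  unfold frobNorm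
  rw [frob_smul_left, frob_smul_right, ← mul_assoc, Real.sqrt_mul (mul_self_nonneg c),
    ← Real.sqrt_mul_self_eq_abs]

lemma hasDerivAt_maxsq (x : ℝ) :
    HasDerivAt (fun y : ℝ => max y 0 ^ 2) (2 * max x 0) x := by
  rcases lt_trichotomy x 0 with hx | hx | hx
  · have h0 : (fun y : ℝ => max y 0 ^ 2) =ᶠ[nhds x] fun _ => (0 : ℝ) := by
      filter_upwards [eventually_lt_nhds hx] with y hy
      simp [max_eq_right hy.le]
    rw [max_eq_right hx.le, mul_zero]
    exact (hasDerivAt_const x (0 : ℝ)).congr_of_eventuallyEq h0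
  · subst hx
    rw [max_self, mul_zero]
    rw [hasDerivAt_iff_isLittleO]
    rw [Asymptotics.isLittleO_iff]
    intro c hc
    filter_upwards [Metric.ball_mem_nhds (0 : ℝ) hc] with y hy
    have hy' : |y| < c := by simpa [Real.dist_eq] using hy
    have h1 : max y 0 ≤ |y| := max_le (le_abs_self y) (abs_nonneg y)
    have h2 : (0:ℝ) ≤ max y 0 := le_max_right _ _
    simp only [sub_zero, smul_zero, max_self, Real.norm_eq_abs]
    have h3 : |(y ⊔ 0) ^ 2 - 0 ^ 2| = (y ⊔ 0) ^ 2 := by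
      simp [abs_of_nonneg (sq_nonneg (y ⊔ 0))]
    rw [h3]
    nlinarith [abs_nonneg y]
  · have h0 : (fun y : ℝ => max y 0 ^ 2) =ᶠ[nhds x] fun y => y ^ 2 := by
      filter_upwards [eventually_gt_nhds hx] with y hy
      simp [max_eq_left hy.le]
    rw [max_eq_left hx.le]
    have := hasDerivAt_pow 2 x
    norm_num at this
    exact this.congr_of_eventuallyEq h0

variable {γ : ℝ}

lemma shinge_eq (hγ : 0 < γ) (x : ℝ) :
    shinge γ x = (max (1 - x) 0 ^ 2 - max (1 - γ - x) 0 ^ 2) / (2 * γ) := by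
  unfold shinge
  split_ifs with h1 h2
  · rw [max_eq_right (by linarith), max_eq_right (by linarith)]
    simp
  · rw [max_eq_left (by linarith), max_eq_right (by linarith)]
    simp
  · push_neg at h1 h2
    rw [max_eq_left (by linarith), max_eq_left (by linarith)]
    field_simp
    ring

lemma shinge'_eq (hγ : 0 < γ) (x : ℝ) :
    shinge' γ x = (2 * max (1 - γ - x) 0 - 2 * max (1 - x) 0) / (2 * γ) := by
  unfold shinge'
  split_ifs with h1 h2
  · rw [max_eq_right (by linarith), max_eq_right (by linarith)]
    simp
  · rw [max_eq_right (by linarith), max_eq_left (by linarith)]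
    field_simp
    ring
  · push_neg at h1 h2
    rw [max_eq_left (by linarith), max_eq_left (by linarith)]
    field_simp
    ring

lemma hasDerivAt_shinge (hγ : 0 < γ) (x : ℝ) :
    HasDerivAt (shinge γ) (shinge' γ x) x := by
  have h1 : HasDerivAt (fun y : ℝ => 1 - y) (-1) x := by
    simpa using (hasDerivAt_id' x).const_sub (1:ℝ)
  have h1' : HasDerivAt (fun y : ℝ => 1 - γ - y) (-1) x := by
    simpa using (hasDerivAt_id' x).const_sub (1 - γ)
  have h2 : HasDerivAt (fun y : ℝ => max (1 - y) 0 ^ 2) (2 * max (1 - x) 0 * (-1)) x :=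
    (hasDerivAt_maxsq (1 - x)).comp x h1
  have h3 : HasDerivAt (fun y : ℝ => max (1 - γ - y) 0 ^ 2) (2 * max (1 - γ - x) 0 * (-1)) x :=
    (hasDerivAt_maxsq (1 - γ - x)).comp x h1'
  have h4 : HasDerivAt (fun y : ℝ => (max (1 - y) 0 ^ 2 - max (1 - γ - y) 0 ^ 2) / (2 * γ)) _ x :=
    (h2.sub h3).div_const (2 * γ)
  have hfun : (fun y : ℝ => (max (1 - y) 0 ^ 2 - max (1 - γ - y) 0 ^ 2) / (2 * γ)) = shinge γ :=
    funext fun y => (shinge_eq hγ y).symm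
  rw [hfun] at h4
  convert h4 using 1
  rw [shinge'_eq hγ]
  ring

lemma shinge'_mono (hγ : 0 < γ) : Monotone (shinge' γ) := by
  intro x y hxy
  unfold shinge'
  split_ifs with h1 h2 h3 h4 h5 h6 h7 h8
  all_goals try push_neg at *
  · exact le_rfl
  · linarith
  · linarith
  · rw [neg_div, neg_nonpos]
    exact div_nonneg (by linarith) hγ.le
  · rw [div_le_div_iff₀ hγ hγ]
    nlinarith
  · linarith
  · linarith
  · rw [neg_div, neg_le_neg_iff, div_le_one hγ]
    linarith
  · exact le_rfl

lemma shinge_convexOn (hγ : 0 < γ) : ConvexOn ℝ Set.univ (shinge γ) := by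
  have hdiff : Differentiable ℝ (shinge γ) := fun x => (hasDerivAt_shinge hγ x).differentiableAt
  have hderiv : deriv (shinge γ) = shinge' γ := funext fun x => (hasDerivAt_shinge hγ x).deriv
  exact Monotone.convexOn_univ_of_deriv hdiff (hderiv ▸ shinge'_mono hγ)

lemma shinge_comb (hγ : 0 < γ) {s u : ℝ} (hs : 0 ≤ s) (hu : 0 ≤ u) (hsu : s + u = 1)
    (a b : ℝ) : shinge γ (s * a + u * b) ≤ s * shinge γ a + u * shinge γ b :=
  (shinge_convexOn hγ).2 (Set.mem_univ a) (Set.mem_univ b) hs hu hsu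

lemma psd_comb {A B : Matrix (Fin d) (Fin d) ℝ} (hA : A.PosSemidef) (hB : B.PosSemidef)
    {s u : ℝ} (hs : 0 ≤ s) (hu : 0 ≤ u) : (s • A + u • B).PosSemidef := by
  rw [Matrix.posSemidef_iff_dotProduct_mulVec]
  constructor
  · have hA1 := hA.1
    have hB1 := hB.1
    simp only [Matrix.IsHermitian, Matrix.conjTranspose_add, Matrix.conjTranspose_smul] at *
    rw [hA1, hB1]
    simp
  · intro x
    have h1 := hA.dotProduct_mulVec_nonneg x
    have h2 := hB.dotProduct_mulVec_nonneg x
    simp only [Matrix.add_mulVec, Matrix.smul_mulVec, dotProduct_add,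
      dotProduct_smul, smul_eq_mul]
    exact add_nonneg (mul_nonneg hs h1) (mul_nonneg hu h2)

lemma growth {ι : Type*} (lam : ℝ) (hγ : 0 < γ) (hlam : 0 < lam)
    (T : Finset ι) (H : ι → Matrix (Fin d) (Fin d) ℝ)
    (Ms M' : Matrix (Fin d) (Fin d) ℝ) (hMs : Ms.PosSemidef) (hM' : M'.PosSemidef)
    (hopt : ∀ M'' : Matrix (Fin d) (Fin d) ℝ, M''.PosSemidef →
      Pobj γ lam T H Ms ≤ Pobj γ lam T H M'') :
    Pobj γ lam T H Ms + lam / 2 * frob (M' - Ms) (M' - Ms) ≤ Pobj γ lam T H M' := by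
  set D := frob (M' - Ms) (M' - Ms) with hDdef
  have hD : 0 ≤ D := frob_self_nonneg _
  have hDexp : D = frob M' M' - 2 * frob M' Ms + frob Ms Ms := by
    rw [hDdef, frob_sub_left, frob_sub_right, frob_sub_right, frob_comm Ms M']
    ring
  have key : ∀ t : ℝ, 0 < t → t ≤ 1 →
      Pobj γ lam T H Ms + lam / 2 * (1 - t) * D ≤ Pobj γ lam T H M' := by
    intro t ht0 ht1
    set Mt := t • M' + (1 - t) • Ms with hMt
    have hpsd : Mt.PosSemidef := psd_comb hM' hMs ht0.le (by linarith)
    have h1 : Pobj γ lam T H Ms ≤ Pobj γ lam T H Mt := hopt Mt hpsd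
    have hfrobMt : ∀ B, frob Mt B = t * frob M' B + (1 - t) * frob Ms B := by
      intro B; rw [hMt, frob_add_left, frob_smul_left, frob_smul_left]
    have hsum : ∑ s ∈ T, shinge γ (frob Mt (H s)) ≤
        t * ∑ s ∈ T, shinge γ (frob M' (H s))
          + (1 - t) * ∑ s ∈ T, shinge γ (frob Ms (H s)) := by
      rw [Finset.mul_sum, Finset.mul_sum, ← Finset.sum_add_distrib]
      refine Finset.sum_le_sum fun s _ => ?_
      rw [hfrobMt]
      exact shinge_comb hγ ht0.le (by linarith) (by ring) _ _
    have hreg : frob Mt Mt = t * frob M' M' + (1 - t) * frob Ms Ms - t * (1 - t) * D := by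
      rw [hMt]
      simp only [frob_add_left, frob_add_right, frob_smul_left, frob_smul_right,
        frob_comm Ms M']
      rw [hDexp]
      ring
    have h2 : Pobj γ lam T H Mt ≤ t * Pobj γ lam T H M' + (1 - t) * Pobj γ lam T H Ms
        - lam / 2 * (t * (1 - t)) * D := by
      unfold Pobj
      rw [frobNorm_sq, frobNorm_sq, frobNorm_sq, hreg]
      nlinarith [hsum]
    have h3 := h1.trans h2
    have h6 : t * (Pobj γ lam T H Ms + lam / 2 * (1 - t) * D) ≤ t * Pobj γ lam T H M' := by
      nlinarith [h3]
    have := le_of_mul_le_mul_left h6 ht0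
    linarith
  rcases eq_or_lt_of_le hD with hD0 | hD0
  · have h := key 1 one_pos le_rfl
    rw [← hD0] at h ⊢
    linarith
  · refine le_of_forall_pos_le_add fun ε hε => ?_
    have hq : 0 < lam / 2 * D := by positivity
    set t := min 1 (ε / (lam / 2 * D)) with ht
    have ht0 : 0 < t := lt_min one_pos (div_pos hε hq)
    have ht1 : t ≤ 1 := min_le_left _ _
    have h := key t ht0 ht1
    have h5 : lam / 2 * t * D ≤ ε := by
      have h7 : t ≤ ε / (lam / 2 * D) := min_le_right _ _
      calc lam / 2 * t * D = (lam / 2 * D) * t := by ring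
        _ ≤ (lam / 2 * D) * (ε / (lam / 2 * D)) := by
            exact mul_le_mul_of_nonneg_left h7 hq.le
        _ = ε := by
            field_simp
    linarith

end RRPB

open RRPB in
/-- Relaxed Regularization Path Bound (RRPB). -/
theorem relaxed_regularization_path_bound {d : ℕ} {ι : Type*} (γ lam0 lam1 : ℝ)
    (hγ : 0 < γ) (hγ1 : γ ≤ 1) (hlam0 : 0 < lam0) (hlam1 : 0 < lam1)
    (T : Finset ι) (H : ι → Matrix (Fin d) (Fin d) ℝ)
    (hH : ∀ t ∈ T, (H t).IsSymm)
    (M0star M1star M0 : Matrix (Fin d) (Fin d) ℝ) (ε : ℝ) (hε : 0 ≤ ε)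
    (hM0star : M0star.PosSemidef)
    (hopt0 : ∀ M' : Matrix (Fin d) (Fin d) ℝ, M'.PosSemidef →
      Pobj γ lam0 T H M0star ≤ Pobj γ lam0 T H M')
    (hM1star : M1star.PosSemidef)
    (hopt1 : ∀ M' : Matrix (Fin d) (Fin d) ℝ, M'.PosSemidef →
      Pobj γ lam1 T H M1star ≤ Pobj γ lam1 T H M')
    (hM0 : M0.IsSymm) (happrox : frobNorm (M0star - M0) ≤ ε) :
    frobNorm (M1star - ((lam0 + lam1) / (2 * lam1)) • M0) ≤
      |lam0 - lam1| / (2 * lam1) * frobNorm M0 +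
        (|lam0 - lam1| + lam0 + lam1) / (2 * lam1) * ε := by
  have g0 := growth lam0 hγ hlam0 T H M0star M1star hM0star hM1star hopt0
  have g1 := growth lam1 hγ hlam1 T H M1star M0star hM1star hM0star hopt1
  set a := frob M0star M0star with ha
  set b := frob M1star M1star with hb
  set c := frob M0star M1star with hc
  have hD01 : frob (M1star - M0star) (M1star - M0star) = b - 2 * c + a := by
    simp only [frob_sub_left, frob_sub_right, frob_comm M1star M0star, ← ha, ← hb, ← hc]
    ring
  have hD10 : frob (M0star - M1star) (M0star - M1star) = b - 2 * c + a := by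
    simp only [frob_sub_left, frob_sub_right, frob_comm M1star M0star, ← ha, ← hb, ← hc]
    ring
  have key : lam0 * a + lam1 * b ≤ (lam0 + lam1) * c := by
    simp only [Pobj, frobNorm_sq, hD01, hD10, ← ha, ← hb] at g0 g1
    linarith
  set c0 : ℝ := (lam0 + lam1) / (2 * lam1) with hc0
  set r : ℝ := |lam0 - lam1| / (2 * lam1) with hr
  have hc0' : 0 ≤ c0 := by positivity
  have hr' : 0 ≤ r := by positivity
  have hXsq : frob (M1star - c0 • M0star) (M1star - c0 • M0star)
      = b - 2 * c0 * c + c0 ^ 2 * a := by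
    simp only [frob_sub_left, frob_sub_right, frob_smul_left, frob_smul_right,
      frob_comm M1star M0star, ← ha, ← hb, ← hc]
    ring
  have hl1 : lam1 ≠ 0 := ne_of_gt hlam1
  have hXle : (2 * lam1) ^ 2 * frob (M1star - c0 • M0star) (M1star - c0 • M0star)
      ≤ (lam0 - lam1) ^ 2 * a := by
    rw [hXsq, hc0]
    have expand : (2 * lam1) ^ 2 *
        (b - 2 * ((lam0 + lam1) / (2 * lam1)) * c + ((lam0 + lam1) / (2 * lam1)) ^ 2 * a)
        = 4 * lam1 ^ 2 * b - 4 * lam1 * (lam0 + lam1) * c + (lam0 + lam1) ^ 2 * a := by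
      field_simp
      ring
    rw [expand]
    nlinarith [mul_le_mul_of_nonneg_left key (by linarith : (0:ℝ) ≤ 4 * lam1)]
  have hX2 : frob (M1star - c0 • M0star) (M1star - c0 • M0star) ≤ r ^ 2 * a := by
    rw [hr, div_pow, sq_abs, div_mul_eq_mul_div, le_div_iff₀ (by positivity)]
    linarith [hXle]
  have hX : frobNorm (M1star - c0 • M0star) ≤ r * frobNorm M0star := by
    have : frobNorm (M1star - c0 • M0star) ≤ Real.sqrt (r ^ 2 * a) := by
      exact Real.sqrt_le_sqrt hX2
    calc frobNorm (M1star - c0 • M0star) ≤ Real.sqrt (r ^ 2 * a) := this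
      _ = r * Real.sqrt a := by
          rw [Real.sqrt_mul (sq_nonneg r), Real.sqrt_sq hr']
      _ = r * frobNorm M0star := rfl
  have hdecomp : M1star - c0 • M0 = (M1star - c0 • M0star) + c0 • (M0star - M0) := by
    rw [smul_sub]
    abel
  have tineq : frobNorm (M1star - c0 • M0)
      ≤ frobNorm (M1star - c0 • M0star) + c0 * frobNorm (M0star - M0) := by
    rw [hdecomp]
    calc frobNorm ((M1star - c0 • M0star) + c0 • (M0star - M0))
        ≤ frobNorm (M1star - c0 • M0star) + frobNorm (c0 • (M0star - M0)) :=
          frobNorm_add_le _ _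
      _ = frobNorm (M1star - c0 • M0star) + c0 * frobNorm (M0star - M0) := by
          rw [frobNorm_smul, abs_of_nonneg hc0']
  have hM0s : frobNorm M0star ≤ frobNorm M0 + ε := by
    have hdec : M0star = M0 + (M0star - M0) := by abel
    calc frobNorm M0star = frobNorm (M0 + (M0star - M0)) := by rw [← hdec]
      _ ≤ frobNorm M0 + frobNorm (M0star - M0) := frobNorm_add_le _ _
      _ ≤ frobNorm M0 + ε := by linarith
  have hRHS : |lam0 - lam1| / (2 * lam1) * frobNorm M0
      + (|lam0 - lam1| + lam0 + lam1) / (2 * lam1) * ε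
      = r * frobNorm M0 + (r + c0) * ε := by
    rw [hr, hc0]
    ring
  rw [hRHS]
  have m1 := mul_le_mul_of_nonneg_left hM0s hr'
  have m2 := mul_le_mul_of_nonneg_left happrox hc0'
  linarith
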